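/- Let m ≥ 0 and q ≥ 1 be natural numbers. There exists N : ℕ such that for every natural number v ≥ N, setting r := ⌈Real.sqrt ((16*q : ℝ)^(m+2) * (Real.log v)^m)⌉ (ceiling as a natural number), the following holds: for every real d with (v : ℝ)^r ≤ d ≤ (v : ℝ)^(2*r), one has (v : ℝ)^((r : ℝ)^2/4) ≥ d^(q * (Real.log d)^((m : ℝ)/(m+2))). -/

import Mathlib

open Real

lemma aux_sqrt_rpow (m : ℕ) (B L : ℝ) (hB : 0 < B) (hL : 0 < L) :
    (Real.sqrt (B ^ (m + 2) * L ^ m)) ^ ((1:ℝ) - (m:ℝ)/((m:ℝ)+2))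
      = B * L ^ ((m:ℝ)/((m:ℝ)+2)) := by
  have hM : (0:ℝ) < (m:ℝ) + 2 := by positivity
  have hA0 : (0:ℝ) ≤ B ^ (m + 2) * L ^ m := by positivity
  have h1b : (1:ℝ) - (m:ℝ)/((m:ℝ)+2) = 2 / ((m:ℝ)+2) := by field_simp; ring
  rw [h1b, Real.sqrt_eq_rpow, ← Real.rpow_mul hA0,
    Real.mul_rpow (by positivity) (by positivity),
    ← Real.rpow_natCast B (m+2), ← Real.rpow_natCast L m,
    ← Real.rpow_mul hB.le, ← Real.rpow_mul hL.le]
  have e1 : ((m:ℝ)+2) * (1 / 2 * (2 / ((m:ℝ)+2))) = 1 := by field_simp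
  have e2 : (m:ℝ) * (1 / 2 * (2 / ((m:ℝ)+2))) = (m:ℝ)/((m:ℝ)+2) := by
    field_simp
  push_cast
  rw [e1, Real.rpow_one]
  congr 1
  rw [e2]

/-- Runtime bound in the general quasi-polynomial reduction: for large enough `v`, with
`r = ⌈√((16q)^(m+2) (log v)^m)⌉` and any feature dimension `d` with `v^r ≤ d ≤ v^(2r)`,
one has `v^(r²/4) ≥ d^(q (log d)^(m/(m+2)))`. -/
theorem general_runtime_bound (m q : ℕ) (hq : 1 ≤ q) :
    ∃ N : ℕ, ∀ v : ℕ, N ≤ v →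
      ∀ d : ℝ,
        (v : ℝ) ^ (⌈Real.sqrt ((16 * q : ℝ) ^ (m + 2) * (Real.log v) ^ m)⌉₊) ≤ d →
        d ≤ (v : ℝ) ^ (2 * ⌈Real.sqrt ((16 * q : ℝ) ^ (m + 2) * (Real.log v) ^ m)⌉₊) →
        (v : ℝ) ^ ((⌈Real.sqrt ((16 * q : ℝ) ^ (m + 2) * (Real.log v) ^ m)⌉₊ : ℝ) ^ 2 / 4) ≥
          d ^ ((q : ℝ) * (Real.log d) ^ ((m : ℝ) / ((m : ℝ) + 2))) := by
  refine ⟨3, fun v hv d hd1 hd2 => ?_⟩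
  have hv1 : (1:ℝ) < v := by
    have : (3:ℝ) ≤ v := by exact_mod_cast hv
    linarith
  have hv0 : (0:ℝ) < v := lt_trans one_pos hv1
  set L : ℝ := Real.log v with hLdef
  have hL : 1 ≤ L := by
    rw [hLdef, Real.le_log_iff_exp_le hv0]
    calc Real.exp 1 ≤ 3 := le_of_lt (lt_of_lt_of_le Real.exp_one_lt_d9 (by norm_num))
    _ ≤ v := by exact_mod_cast hv
  have hL0 : 0 < L := lt_of_lt_of_le one_pos hL
  set B : ℝ := 16 * q with hBdef
  have hB : 16 ≤ B := by
    have : (1:ℝ) ≤ q := by exact_mod_cast hq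
    rw [hBdef]; nlinarith
  have hB0 : (0:ℝ) < B := by linarith
  set A : ℝ := B ^ (m + 2) * L ^ m with hAdef
  have hA1 : (1:ℝ) ≤ A := by
    have h1 : (1:ℝ) ≤ B ^ (m+2) := one_le_pow₀ (by linarith)
    have h2 : (1:ℝ) ≤ L ^ m := one_le_pow₀ hL
    rw [hAdef]; nlinarith
  have hA0 : (0:ℝ) ≤ A := by linarith
  set r : ℕ := ⌈Real.sqrt A⌉₊ with hrdef
  have hsr : Real.sqrt A ≤ (r:ℝ) := Nat.le_ceil _
  have hs1 : (1:ℝ) ≤ Real.sqrt A := by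
    rw [show (1:ℝ) = Real.sqrt 1 by simp]
    exact Real.sqrt_le_sqrt hA1
  have hr1 : (1:ℝ) ≤ (r:ℝ) := le_trans hs1 hsr
  have hr0 : (0:ℝ) < r := lt_of_lt_of_le one_pos hr1
  set b : ℝ := (m:ℝ) / ((m:ℝ) + 2) with hbdef
  have hM0 : (0:ℝ) < (m:ℝ) + 2 := by positivity
  have hb0 : 0 ≤ b := by positivity
  have hb1 : b ≤ 1 := by
    rw [hbdef, div_le_one hM0]; linarith
  have h1b : (1:ℝ) - b = 2 / ((m:ℝ) + 2) := by
    rw [hbdef]; field_simp; ring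
  -- key inequality
  have hkey : 16 * (q:ℝ) * L ^ b ≤ (r:ℝ) ^ ((1:ℝ) - b) := by
    have step : (Real.sqrt A) ^ ((1:ℝ) - b) ≤ (r:ℝ) ^ ((1:ℝ) - b) :=
      Real.rpow_le_rpow (Real.sqrt_nonneg _) hsr (by linarith)
    have hcomp : (Real.sqrt A) ^ ((1:ℝ) - b) = B * L ^ b := aux_sqrt_rpow m B L hB0 hL0
    rw [hBdef] at hcomp
    linarith [hcomp ▸ step]
  -- log d bounds
  have hd0 : (0:ℝ) < d := lt_of_lt_of_le (by positivity) hd1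
  set X : ℝ := Real.log d with hXdef
  have hXlb : (r:ℝ) * L ≤ X := by
    have := Real.log_le_log (by positivity) hd1
    rwa [Real.log_pow] at this
  have hXub : X ≤ 2 * (r:ℝ) * L := by
    have := Real.log_le_log hd0 hd2
    rw [Real.log_pow] at this
    push_cast at this
    linarith
  have hX0 : 0 < X := lt_of_lt_of_le (mul_pos hr0 hL0) hXlb
  -- reduce to log comparison
  rw [ge_iff_le, Real.rpow_def_of_pos hd0, Real.rpow_def_of_pos hv0, Real.exp_le_exp]
  -- goal : X * (q * X ^ b) ≤ L * ((r:ℝ)^2/4)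
  have h2rL : (0:ℝ) ≤ 2 * (r:ℝ) * L := by positivity
  have step1 : X ^ b ≤ (2 * (r:ℝ) * L) ^ b := Real.rpow_le_rpow hX0.le hXub hb0
  have step2 : (2 * (r:ℝ) * L) ^ b ≤ 2 * ((r:ℝ) ^ b * L ^ b) := by
    have e : (2 * (r:ℝ) * L) ^ b = 2 ^ b * ((r:ℝ) ^ b * L ^ b) := by
      rw [Real.mul_rpow (by positivity) hL0.le, Real.mul_rpow (by norm_num) hr0.le]
      ring
    have h2b : (2:ℝ) ^ b ≤ 2 := by
      calc (2:ℝ) ^ b ≤ (2:ℝ) ^ (1:ℝ) := Real.rpow_le_rpow_of_exponent_le (by norm_num) hb1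
      _ = 2 := Real.rpow_one 2
    rw [e]
    have : (0:ℝ) ≤ (r:ℝ) ^ b * L ^ b := by positivity
    nlinarith
  have hmul : (r:ℝ) ^ ((1:ℝ) - b) * (r:ℝ) ^ b = (r:ℝ) := by
    rw [← Real.rpow_add hr0]; simp
  have hq0 : (0:ℝ) ≤ q := by positivity
  have hXb0 : (0:ℝ) ≤ X ^ b := by positivity
  have hrb0 : (0:ℝ) ≤ (r:ℝ) ^ b := by positivity
  have hLb0 : (0:ℝ) ≤ L ^ b := by positivity
  have main : X * ((q:ℝ) * X ^ b) ≤ L * ((r:ℝ) ^ 2 / 4) := by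
    have c1 : X * ((q:ℝ) * X ^ b) ≤ (2 * (r:ℝ) * L) * ((q:ℝ) * (2 * ((r:ℝ) ^ b * L ^ b))) := by
      have hXbb : X ^ b ≤ 2 * ((r:ℝ) ^ b * L ^ b) := le_trans step1 step2
      have := mul_le_mul hXub (mul_le_mul_of_nonneg_left hXbb hq0) (by positivity) h2rL
      linarith [this]
    have c2 : (2 * (r:ℝ) * L) * ((q:ℝ) * (2 * ((r:ℝ) ^ b * L ^ b)))
        = (16 * (q:ℝ) * L ^ b) * ((r:ℝ) ^ b) * ((r:ℝ) * L) / 4 := by ring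
    have c3 : (16 * (q:ℝ) * L ^ b) * ((r:ℝ) ^ b) * ((r:ℝ) * L) / 4
        ≤ ((r:ℝ) ^ ((1:ℝ)-b) * (r:ℝ) ^ b) * ((r:ℝ) * L) / 4 := by
      have hh : (16 * (q:ℝ) * L ^ b) * ((r:ℝ) ^ b) ≤ (r:ℝ) ^ ((1:ℝ)-b) * (r:ℝ) ^ b :=
        mul_le_mul_of_nonneg_right hkey hrb0
      have hrL : (0:ℝ) ≤ (r:ℝ) * L := by positivity
      have := mul_le_mul_of_nonneg_right hh hrL
      linarith
    rw [hmul] at c3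
    calc X * ((q:ℝ) * X ^ b) ≤ _ := c1
    _ = _ := c2
    _ ≤ (r:ℝ) * ((r:ℝ) * L) / 4 := c3
    _ = L * ((r:ℝ) ^ 2 / 4) := by ring
  exact main
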